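/- Let m ≥ 2 be an integer, let B be a real symmetric positive definite m×m matrix, and let T be a real symmetric m×m matrix with trace(T) = 0. Then trace(B⁻¹ T B⁻¹ T) ≥ (1/(m-1)) (trace(B⁻¹ T))². -/

import Mathlib

open Matrix Finset

private lemma key_sum {m : ℕ} (hm : 2 ≤ m) (lam : Fin m → ℝ) (k : Fin m)
    (hk : lam k * (∑ i, lam i) ≤ 0) :
    (∑ i, lam i) ^ 2 ≤ ((m : ℝ) - 1) * ∑ i, lam i ^ 2 := by
  set s := ∑ i, lam i with hs
  have h1 : s ^ 2 ≤ (s - lam k) ^ 2 := by nlinarith [sq_nonneg (lam k)]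
  have h2 : s - lam k = ∑ i ∈ Finset.univ.erase k, lam i := by
    rw [Finset.sum_erase_eq_sub (Finset.mem_univ k)]
  have h3 : (∑ i ∈ Finset.univ.erase k, lam i) ^ 2
      ≤ ((Finset.univ.erase k).card : ℝ) * ∑ i ∈ Finset.univ.erase k, lam i ^ 2 :=
    sq_sum_le_card_mul_sum_sq
  have hcard : ((Finset.univ.erase k).card : ℝ) = (m : ℝ) - 1 := by
    rw [Finset.card_erase_of_mem (Finset.mem_univ k)]
    simp only [Finset.card_univ, Fintype.card_fin]
    have : 1 ≤ m := by omega
    push_cast [Nat.cast_sub this]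
    ring
  have h4 : ∑ i ∈ Finset.univ.erase k, lam i ^ 2 ≤ ∑ i, lam i ^ 2 :=
    Finset.sum_le_sum_of_subset_of_nonneg (Finset.subset_univ _)
      (fun i _ _ => sq_nonneg _)
  have hm1 : (0:ℝ) ≤ (m : ℝ) - 1 := by
    have : (2:ℝ) ≤ (m:ℝ) := by exact_mod_cast hm
    linarith
  calc s ^ 2 ≤ (∑ i ∈ Finset.univ.erase k, lam i) ^ 2 := by rw [← h2]; exact h1
    _ ≤ ((m : ℝ) - 1) * ∑ i ∈ Finset.univ.erase k, lam i ^ 2 := by rw [← hcard]; exact h3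
    _ ≤ ((m : ℝ) - 1) * ∑ i, lam i ^ 2 := by
        exact mul_le_mul_of_nonneg_left h4 hm1

private lemma exists_bad {m : ℕ} (hm : 2 ≤ m) (lam c : Fin m → ℝ) (hc : ∀ i, 0 < c i)
    (h0 : ∑ i, lam i * c i = 0) : ∃ k, lam k * (∑ i, lam i) ≤ 0 := by
  by_contra h
  push_neg at h
  set s := ∑ i, lam i with hs
  have hne : Nonempty (Fin m) := ⟨⟨0, by omega⟩⟩
  have hs0 : s ≠ 0 := by
    intro h0'
    have := h (Classical.arbitrary (Fin m))
    rw [h0', mul_zero] at this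
    exact lt_irrefl 0 this
  rcases hs0.lt_or_gt with hneg | hpos
  · have hall : ∀ i, lam i < 0 := fun i => by nlinarith [h i]
    have : s < 0 := by
      rw [hs]
      exact Finset.sum_neg (fun i _ => hall i) Finset.univ_nonempty
    have hsum : ∑ i, lam i * c i < 0 := by
      apply Finset.sum_neg (fun i _ => mul_neg_of_neg_of_pos (hall i) (hc i))
        Finset.univ_nonempty
    linarith [h0, hsum]
  · have hall : ∀ i, 0 < lam i := fun i => by nlinarith [h i]
    have hsum : 0 < ∑ i, lam i * c i :=
      Finset.sum_pos (fun i _ => mul_pos (hall i) (hc i)) Finset.univ_nonempty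
    linarith [h0, hsum]

private lemma posdef_conj {n : Type*} [Fintype n] [DecidableEq n]
    {B U : Matrix n n ℝ} (hB : B.PosDef) (hU : Function.Injective U.mulVec) :
    (Uᴴ * B * U).PosDef := by
  refine PosDef.of_dotProduct_mulVec_pos (isHermitian_conjTranspose_mul_mul U hB.1) fun x hx => ?_
  have hUx : U *ᵥ x ≠ 0 := by
    intro h
    exact hx (hU (by simpa using h))
  have key : star x ⬝ᵥ (Uᴴ * B * U) *ᵥ x = star (U *ᵥ x) ⬝ᵥ B *ᵥ (U *ᵥ x) := by
    rw [star_mulVec, ← Matrix.mulVec_mulVec, ← Matrix.mulVec_mulVec,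
      Matrix.dotProduct_mulVec]
  rw [key]
  exact hB.dotProduct_mulVec_pos hUx

private lemma posdef_diag_pos {n : Type*} [Fintype n] [DecidableEq n]
    {M : Matrix n n ℝ} (hM : M.PosDef) (i : n) : 0 < M i i := by
  have := hM.dotProduct_mulVec_pos (x := Pi.single i 1) (by
    intro h
    have := congrFun h i
    simp at this)
  simpa [Matrix.mulVec_single, dotProduct, Pi.single_apply, Finset.sum_ite_eq',
    mul_comm] using this

/-- For `m ≥ 2`, a real symmetric positive definite `m×m` matrix `B`
and a real symmetric `m×m` matrix `T` with `trace T = 0`, one has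
`trace(B⁻¹ T B⁻¹ T) ≥ (1/(m-1)) (trace(B⁻¹ T))²`. -/
theorem trace_inv_mul_sq_ge (m : ℕ) (hm : 2 ≤ m) (B T : Matrix (Fin m) (Fin m) ℝ)
    (hBsymm : B.IsSymm) (hBpd : B.PosDef) (hTsymm : T.IsSymm) (hTtr : T.trace = 0) :
    (B⁻¹ * T * B⁻¹ * T).trace ≥ (1 / ((m : ℝ) - 1)) * (B⁻¹ * T).trace ^ 2 := by
  classical
  -- R: positive semidefinite square root of B
  open scoped MatrixOrder in
  obtain ⟨R, hRmul, hRherm⟩ : ∃ R : Matrix (Fin m) (Fin m) ℝ, R * R = B ∧ R.IsHermitian :=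
    ⟨CFC.sqrt B, CFC.sqrt_mul_sqrt_self B hBpd.posSemidef.nonneg,
      (CFC.sqrt_nonneg B).posSemidef.1⟩
  have hBdet : B.det ≠ 0 := hBpd.det_pos.ne'
  have hRdet : R.det ≠ 0 := by
    intro h
    apply hBdet
    rw [← hRmul, Matrix.det_mul, h, mul_zero]
  have hRunit : IsUnit R.det := hRdet.isUnit
  have hRinvR : R⁻¹ * R = 1 := Matrix.nonsing_inv_mul R hRunit
  have hRRinv : R * R⁻¹ = 1 := Matrix.mul_nonsing_inv R hRunit
  have hBinv : B⁻¹ = R⁻¹ * R⁻¹ := by rw [← hRmul, Matrix.mul_inv_rev]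
  set S := R⁻¹ * T * R⁻¹ with hSdef
  have hRinvherm : (R⁻¹).IsHermitian := hRherm.inv
  have hTherm : T.IsHermitian := by
    rwa [Matrix.IsHermitian, Matrix.conjTranspose_eq_transpose_of_trivial]
  have hSherm : S.IsHermitian := by
    rw [Matrix.IsHermitian, hSdef, Matrix.conjTranspose_mul, Matrix.conjTranspose_mul,
      hRinvherm.eq, hTherm.eq, Matrix.mul_assoc]
  -- trace identities
  have e1 : (B⁻¹ * T * B⁻¹ * T).trace = (S * S).trace := by
    rw [hBinv]
    have h1 : R⁻¹ * R⁻¹ * T * (R⁻¹ * R⁻¹) * T = R⁻¹ * (S * (R⁻¹ * T)) := by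
      simp only [hSdef, Matrix.mul_assoc]
    rw [h1, Matrix.trace_mul_comm]
    congr 1
    simp only [hSdef, Matrix.mul_assoc]
  have e2 : (B⁻¹ * T).trace = S.trace := by
    rw [hBinv, Matrix.mul_assoc, Matrix.trace_mul_comm, hSdef, Matrix.mul_assoc]
  have e3 : (S * B).trace = 0 := by
    have hRR : R⁻¹ * (R * R) = R := by rw [← Matrix.mul_assoc, hRinvR, Matrix.one_mul]
    have : S * B = R⁻¹ * (T * R) := by
      rw [hSdef, ← hRmul]
      simp only [Matrix.mul_assoc, hRR]
    rw [this, Matrix.trace_mul_comm, Matrix.mul_assoc, hRRinv, Matrix.mul_one, hTtr]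
  -- spectral theorem for S
  set U : Matrix (Fin m) (Fin m) ℝ := (hSherm.eigenvectorUnitary : Matrix (Fin m) (Fin m) ℝ) with hUdef
  set lam : Fin m → ℝ := hSherm.eigenvalues with hlamdef
  have hUU : U * star U = 1 := Matrix.mem_unitaryGroup_iff.mp hSherm.eigenvectorUnitary.2
  have hUU' : star U * U = 1 := Matrix.mem_unitaryGroup_iff'.mp hSherm.eigenvectorUnitary.2
  have hdiag : Matrix.diagonal (RCLike.ofReal ∘ lam) = Matrix.diagonal lam := rfl
  have hspec : S = U * Matrix.diagonal lam * star U := by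
    rw [← hdiag]; exact hSherm.spectral_theorem
  have htrS : S.trace = ∑ i, lam i := by
    rw [hspec, Matrix.trace_mul_cycle, hUU', Matrix.one_mul, Matrix.trace_diagonal]
  have htrSS : (S * S).trace = ∑ i, lam i ^ 2 := by
    have : S * S = U * Matrix.diagonal (fun i => lam i * lam i) * star U := by
      rw [hspec]
      simp only [Matrix.mul_assoc]
      rw [← Matrix.mul_assoc (star U) U, hUU', Matrix.one_mul,
        ← Matrix.mul_assoc (Matrix.diagonal lam), Matrix.diagonal_mul_diagonal]
    rw [this, Matrix.trace_mul_cycle, hUU', Matrix.one_mul, Matrix.trace_diagonal]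
    exact Finset.sum_congr rfl fun i _ => (sq (lam i)).symm
  -- weighted sum with positive weights
  have hUinj : Function.Injective U.mulVec := by
    intro x y hxy
    have := congrArg (fun v => (star U) *ᵥ v) hxy
    simpa [Matrix.mulVec_mulVec, hUU'] using this
  have hMpd : (Uᴴ * B * U).PosDef := posdef_conj hBpd hUinj
  have hc : ∀ i, 0 < (Uᴴ * B * U) i i := posdef_diag_pos hMpd
  have htrSB : (S * B).trace = ∑ i, lam i * (Uᴴ * B * U) i i := by
    have h1 : S * B = U * (Matrix.diagonal lam * (star U * B)) := by
      rw [hspec]; simp only [Matrix.mul_assoc]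
    rw [h1, Matrix.trace_mul_comm, Matrix.mul_assoc]
    have hstar : star U = Uᴴ := rfl
    rw [hstar]
    simp [Matrix.trace, Matrix.diag, Matrix.diagonal_mul]
  have hwsum : ∑ i, lam i * (Uᴴ * B * U) i i = 0 := by rw [← htrSB, e3]
  obtain ⟨k, hk⟩ := exists_bad hm lam _ hc hwsum
  have key := key_sum hm lam k hk
  -- conclude
  rw [ge_iff_le, e1, e2, htrS, htrSS]
  have hm1 : (0:ℝ) < (m : ℝ) - 1 := by
    have : (2:ℝ) ≤ (m:ℝ) := by exact_mod_cast hm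
    linarith
  rw [one_div, inv_mul_le_iff₀ hm1]
  linarith [key]
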